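/- arXiv:2212.05403 — 2 statements merged into one kernel-verified Lean document; each statement's English description precedes it below -/
import Mathlib

section
/- The SPO+ loss upper-bounds the regret: for all ĉ, c, we have l_SPO+(ĉ,c) = −min_{w∈S}(2ĉ−c)ᵀw + 2ĉᵀw*(c) − z*(c) ≥ cᵀw*(ĉ) − z*(c). -/
def dot {n : ℕ} (c w : Fin n → ℝ) : ℝ := ∑ i, c i * w i

/-- SPO+ loss upper-bounds regret:
`−min_{w∈S}(2ĉ−c)ᵀw + 2ĉᵀw*(c) − z*(c) ≥ cᵀw*(ĉ) − z*(c)`. -/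
theorem spo_plus_upper_bounds_regret {n : ℕ} (S : Set (Fin n → ℝ)) (hS : S.Nonempty)
    (hScompact : IsCompact S)
    (c chat : Fin n → ℝ)
    (wc wchat : Fin n → ℝ) (zc zm : ℝ)
    (hwc_mem : wc ∈ S) (hwc_min : ∀ w ∈ S, dot c wc ≤ dot c w)
    (hzc : IsLeast ((fun w => dot c w) '' S) zc)
    (hzm : IsLeast ((fun w => dot (fun i => 2 * chat i - c i) w) '' S) zm)
    (hwchat_mem : wchat ∈ S) (hwchat_min : ∀ w ∈ S, dot chat wchat ≤ dot chat w) :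
    -zm + 2 * dot chat wc - zc ≥ dot c wchat - zc := by
  have h1 : zm ≤ dot (fun i => 2 * chat i - c i) wchat :=
    hzm.2 ⟨wchat, hwchat_mem, rfl⟩
  have h2 : dot (fun i => 2 * chat i - c i) wchat
      = 2 * dot chat wchat - dot c wchat := by
    simp only [dot, Finset.mul_sum, ← Finset.sum_sub_distrib]
    congr 1; ext i; ring
  have h3 : dot chat wchat ≤ dot chat wc := hwchat_min wc hwc_mem
  rw [h2] at h1
  linarith
end

section
/- The vector 2(w*(c) − w*(2ĉ−c)) is a subgradient of the SPO+ loss at ĉ: for all c' ∈ ℝⁿ, l_SPO+(c',c) ≥ l_SPO+(ĉ,c) + 2(w*(c) − w*(2ĉ−c))ᵀ(c' − ĉ). -/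
/-- `2(w*(c) − w*(2ĉ−c))` is a subgradient of the SPO+ loss at `ĉ`:
for all `c'`, `l_SPO+(c',c) ≥ l_SPO+(ĉ,c) + 2(w*(c) − w*(2ĉ−c))ᵀ(c' − ĉ)`.
Here `m v` denotes a chosen minimizer of `vᵀw` over `S`, and `wc = m c`. -/
theorem spo_plus_subgradient {n : ℕ} (S : Set (Fin n → ℝ)) (hS : S.Nonempty)
    (hScompact : IsCompact S)
    (m : (Fin n → ℝ) → (Fin n → ℝ))
    (hm_mem : ∀ v, m v ∈ S) (hm_min : ∀ v, ∀ w ∈ S, dot v (m v) ≤ dot v w)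
    (c chat : Fin n → ℝ) :
    ∀ c' : Fin n → ℝ,
      (-(dot (fun i => 2 * c' i - c i) (m (fun i => 2 * c' i - c i)))
          + 2 * dot c' (m c) - dot c (m c))
      ≥ (-(dot (fun i => 2 * chat i - c i) (m (fun i => 2 * chat i - c i)))
          + 2 * dot chat (m c) - dot c (m c))
        + dot (fun i => 2 * (m c i - m (fun i => 2 * chat i - c i) i))
            (fun i => c' i - chat i) := by
  intro c'
  set wbar := m (fun i => 2 * chat i - c i) with hwbar
  have key : dot (fun i => 2 * c' i - c i) (m (fun i => 2 * c' i - c i))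
      ≤ dot (fun i => 2 * c' i - c i) wbar :=
    hm_min _ _ (hm_mem _)
  have e : dot (fun i => 2 * c' i - c i) wbar
      - dot (fun i => 2 * chat i - c i) wbar
      + 2 * dot chat (m c)
      + dot (fun i => 2 * (m c i - wbar i)) (fun i => c' i - chat i)
      = 2 * dot c' (m c) := by
    simp only [dot, Finset.mul_sum, ← Finset.sum_sub_distrib, ← Finset.sum_add_distrib]
    exact Finset.sum_congr rfl fun i _ => by ring
  linarith
end
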